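/- The number of well-labeled plane rooted trees with n edges and root label 0 is 3^n/(2n+1) · C(2n+1, n), and the number of well-labeled plane forests with m trees, n edges, and prescribed root labels (all roots labeled 0, say) is 3^n · m/(2n+m) · C(2n+m, n). -/

import Mathlib

-- A plane rooted tree with integer increments on edges: a tree is a node together
-- with the (ordered) forest of its subtrees, each subtree carrying the label increment
-- of the edge to its root.
mutual
  inductive PTree : Type where
    | node : PForest → PTree
  inductive PForest : Type where
    | nil : PForest
    | cons : ℤ → PTree → PForest → PForest
end

mutual
  def PTree.edges : PTree → ℕ
    | .node f => PForest.edges f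
  def PForest.edges : PForest → ℕ
    | .nil => 0
    | .cons _ t f => 1 + PTree.edges t + PForest.edges f
end

-- A labeled tree is well-labeled when every edge increment lies in `{-1,0,1}`.
mutual
  def PTree.ok : PTree → Prop
    | .node f => PForest.ok f
  def PForest.ok : PForest → Prop
    | .nil => True
    | .cons i t f => (i = -1 ∨ i = 0 ∨ i = 1) ∧ PTree.ok t ∧ PForest.ok f
end

/-- Forests of `m` well-labeled trees with `n` edges in total. -/
abbrev WLF (m n : ℕ) : Type :=
  {l : List PTree // l.length = m ∧ (∀ t ∈ l, t.ok) ∧ (l.map PTree.edges).sum = n}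

/-- Allowed increments. -/
abbrev Incr : Type := {i : ℤ // i = -1 ∨ i = 0 ∨ i = 1}

def incrEquiv : Incr ≃ ({-1, 0, 1} : Finset ℤ) :=
  Equiv.subtypeEquivRight (fun i => by simp)

instance : Finite Incr := Finite.of_equiv _ incrEquiv.symm

lemma card_Incr : Nat.card Incr = 3 := by
  rw [Nat.card_congr incrEquiv, Nat.card_eq_fintype_card, Fintype.card_coe]
  decide

lemma tree_eq_of_edges_zero (t : PTree) (h : t.edges = 0) : t = .node .nil := by
  obtain ⟨f⟩ := t
  cases f with
  | nil => rfl
  | cons i t' f' => simp [PTree.edges, PForest.edges] at h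

/-- The forward map of the recurrence bijection. -/
def fwd (k n : ℕ) : WLF k (n+1) ⊕ Incr × WLF (k+2) n → WLF (k+1) (n+1)
  | .inl ⟨tl, h⟩ =>
      ⟨.node .nil :: tl, by
        obtain ⟨h1, h2, h3⟩ := h
        refine ⟨by simp [h1], ?_, by simp [PTree.edges, PForest.edges, h3]⟩
        intro t ht
        rcases List.mem_cons.mp ht with rfl | ht
        · exact trivial
        · exact h2 t ht⟩
  | .inr ⟨⟨i, hi⟩, ⟨t :: .node f :: tl, h⟩⟩ =>
      ⟨.node (.cons i t f) :: tl, by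
        obtain ⟨h1, h2, h3⟩ := h
        refine ⟨by simpa using h1, ?_, ?_⟩
        · intro u hu
          rcases List.mem_cons.mp hu with rfl | hu
          · exact ⟨hi, h2 t (by simp), h2 (.node f) (by simp)⟩
          · exact h2 u (by simp [hu])
        · simp only [PTree.edges, PForest.edges, List.map_cons, List.sum_cons] at h3 ⊢
          omega⟩
  | .inr ⟨_, ⟨[], h⟩⟩ => absurd h.1 (by simp)
  | .inr ⟨_, ⟨[_], h⟩⟩ => absurd h.1 (by simp)

lemma fwd_bij (k n : ℕ) : Function.Bijective (fwd k n) := by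
  constructor
  · rintro (⟨tl, h⟩ | ⟨⟨i, hi⟩, ⟨l, hl⟩⟩) (⟨tl', h'⟩ | ⟨⟨i', hi'⟩, ⟨l', hl'⟩⟩) hab
    · simp only [fwd, Subtype.mk.injEq, List.cons.injEq] at hab
      exact congrArg Sum.inl (Subtype.ext hab.2)
    · match l', hl' with
      | t :: .node f :: tl'', hl' =>
        simp only [fwd, Subtype.mk.injEq, List.cons.injEq, PTree.node.injEq] at hab
        exact absurd hab.1 (by simp)
    · match l, hl with
      | t :: .node f :: tl'', hl =>
        simp only [fwd, Subtype.mk.injEq, List.cons.injEq, PTree.node.injEq] at hab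
        exact absurd hab.1 (by simp)
    · match l, hl, l', hl' with
      | t :: .node f :: tl, hl, t' :: .node f' :: tl', hl' =>
        simp only [fwd, Subtype.mk.injEq, List.cons.injEq, PTree.node.injEq,
          PForest.cons.injEq] at hab
        obtain ⟨⟨rfl, rfl, rfl⟩, rfl⟩ := hab
        rfl
  · rintro ⟨l, hlen, hok, hsum⟩
    match l, hlen with
    | (.node .nil) :: tl, hlen =>
      refine ⟨.inl ⟨tl, by simpa using hlen, fun t ht => hok t (by simp [ht]),
        by simpa [PTree.edges, PForest.edges] using hsum⟩, rfl⟩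
    | (.node (.cons i t f)) :: tl, hlen =>
      have hco := hok _ List.mem_cons_self
      simp only [PTree.ok, PForest.ok] at hco
      have hsum' : (List.map PTree.edges (t :: .node f :: tl)).sum = n := by
        simp only [PTree.edges, PForest.edges, List.map_cons, List.sum_cons] at hsum ⊢
        omega
      refine ⟨.inr ⟨⟨i, hco.1⟩, ⟨t :: .node f :: tl, by simpa using hlen, ?_, hsum'⟩⟩, rfl⟩
      intro u hu
      rcases List.mem_cons.mp hu with rfl | hu
      · exact hco.2.1
      · rcases List.mem_cons.mp hu with rfl | hu
        · exact hco.2.2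
        · exact hok u (by simp [hu])

instance unique_WLF_zero (m : ℕ) : Unique (WLF m 0) := by
  refine ⟨⟨⟨List.replicate m (.node .nil), by simp, ?_, ?_⟩⟩, ?_⟩
  · intro t ht
    rw [List.eq_of_mem_replicate ht]; exact trivial
  · simp [List.map_replicate, PTree.edges, PForest.edges]
  · rintro ⟨l, hlen, hok, hsum⟩
    apply Subtype.ext
    simp only
    rw [List.eq_replicate_iff]
    refine ⟨hlen, fun b hb => tree_eq_of_edges_zero b ?_⟩
    exact List.sum_eq_zero_iff.mp hsum _ (List.mem_map_of_mem hb)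

instance isEmpty_WLF (n : ℕ) : IsEmpty (WLF 0 (n+1)) := by
  refine ⟨?_⟩
  rintro ⟨l, hlen, hok, hsum⟩
  rw [List.length_eq_zero_iff] at hlen
  subst hlen
  simp at hsum

lemma main : ∀ n m : ℕ, Finite (WLF m n) ∧
    (2 * n + m) * Nat.card (WLF m n) = 3 ^ n * m * Nat.choose (2 * n + m) n := by
  intro n
  induction n with
  | zero =>
      intro m
      refine ⟨Finite.of_subsingleton, ?_⟩
      rw [Nat.card_unique]
      simp
  | succ n ihn =>
      intro m
      induction m with
      | zero =>
          refine ⟨Finite.of_subsingleton, ?_⟩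
          rw [Nat.card_of_isEmpty]
          simp
      | succ k ihm =>
          obtain ⟨finA, hA⟩ := ihm
          obtain ⟨finB, hB⟩ := ihn (k + 2)
          have e : WLF k (n+1) ⊕ Incr × WLF (k+2) n ≃ WLF (k+1) (n+1) :=
            Equiv.ofBijective _ (fwd_bij k n)
          have finS : Finite (WLF (k+1) (n+1)) := Finite.of_equiv _ e
          refine ⟨finS, ?_⟩
          have hcard : Nat.card (WLF (k+1) (n+1))
              = Nat.card (WLF k (n+1)) + 3 * Nat.card (WLF (k+2) n) := by
            rw [← Nat.card_congr e, Nat.card_sum, Nat.card_prod, card_Incr]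
          rw [hcard]
          set A := Nat.card (WLF k (n+1)) with hAdef
          set B := Nat.card (WLF (k+2) n) with hBdef
          rw [show 2 * (n + 1) + k = 2*n+k+2 by ring] at hA
          rw [show 2 * n + (k + 2) = 2*n+k+2 by ring] at hB
          have hpascal : Nat.choose (2 * (n+1) + (k+1)) (n+1)
              = Nat.choose (2*n+k+2) n + Nat.choose (2*n+k+2) (n+1) := by
            rw [show 2 * (n+1) + (k+1) = (2*n+k+2) + 1 by ring, Nat.choose_succ_succ]
          rw [hpascal]
          have hrel : Nat.choose (2*n+k+2) (n+1) * (n+1)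
              = Nat.choose (2*n+k+2) n * (n+k+2) := by
            have := Nat.choose_succ_right_eq (2*n+k+2) n
            rwa [show 2*n+k+2 - n = n+k+2 by omega] at this
          have hs0 : 0 < 2*n+k+2 := by omega
          apply Nat.eq_of_mul_eq_mul_left hs0
          zify at hA hB hrel ⊢
          linear_combination ((2:ℤ)*n+k+3) * hA + 3 * ((2:ℤ)*n+k+3) * hB
            - 2 * 3^(n+1) * hrel

/-- The number of well-labeled plane rooted trees with `n` edges (root label fixed, say
to `0`) is `3^n/(2n+1)·C(2n+1,n)`, and the number of well-labeled plane forests with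
`m ≥ 1` trees, `n` edges and prescribed root labels (all roots labeled `0`) is
`3^n·m/(2n+m)·C(2n+m,n)`. -/
theorem stmt_14 :
    (∀ n : ℕ,
      (2 * n + 1) * Nat.card {t : PTree // t.ok ∧ t.edges = n}
        = 3 ^ n * Nat.choose (2 * n + 1) n) ∧
    (∀ n m : ℕ, 1 ≤ m →
      (2 * n + m) * Nat.card
          {l : List PTree // l.length = m ∧ (∀ t ∈ l, t.ok) ∧ (l.map PTree.edges).sum = n}
        = 3 ^ n * m * Nat.choose (2 * n + m) n) := by
  constructor
  · intro n
    have e : {t : PTree // t.ok ∧ t.edges = n} ≃ WLF 1 n := by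
      refine Equiv.ofBijective (fun t => ⟨[t.1], by simp [t.2.1, t.2.2]⟩) ⟨?_, ?_⟩
      · rintro ⟨t, ht⟩ ⟨t', ht'⟩ h
        simp only [Subtype.mk.injEq, List.cons.injEq] at h
        exact Subtype.ext h.1
      · rintro ⟨l, hlen, hok, hsum⟩
        obtain ⟨t, rfl⟩ := List.length_eq_one_iff.mp hlen
        exact ⟨⟨t, hok t (by simp), by simpa using hsum⟩, rfl⟩
    rw [Nat.card_congr e]
    have := (main n 1).2
    simpa using this
  · intro n m _
    exact (main n m).2
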